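/- The subtree core of a tree consists of either one vertex or two adjacent vertices. -/

import Mathlib

open SimpleGraph

/-- Eccentricity of a vertex: maximum distance to any vertex. -/
noncomputable def ecc {V : Type*} [Fintype V] (G : SimpleGraph V) (v : V) : ℕ :=
  Finset.univ.sup fun u => G.dist u v

/-- Center: vertices of minimum eccentricity. -/
noncomputable def center {V : Type*} [Fintype V] (G : SimpleGraph V) : Set V :=
  {v | ∀ u, ecc G v ≤ ecc G u}

/-- Number of vertices of the component of `G - v` containing `u`; this equals the
number of edges of the corresponding branch of a tree at `v`. -/
noncomputable def branchSize {V : Type*} (G : SimpleGraph V) (v : V) (u : {x : V // x ≠ v}) : ℕ :=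
  Set.ncard {x : {y : V // y ≠ v} | (G.induce {y : V | y ≠ v}).Reachable ⟨u.1, u.2⟩ ⟨x.1, x.2⟩}

/-- Weight of a vertex: maximal number of edges in a branch at `v`. -/
noncomputable def weight {V : Type*} [Fintype V] [DecidableEq V] (G : SimpleGraph V) (v : V) : ℕ :=
  Finset.univ.sup fun u : {x : V // x ≠ v} => branchSize G v u

/-- Centroid: vertices of minimum weight. -/
noncomputable def centroid {V : Type*} [Fintype V] [DecidableEq V] (G : SimpleGraph V) : Set V :=
  {v | ∀ u, weight G v ≤ weight G u}

/-- Number of subtrees (vertex sets inducing a connected subgraph) containing all of `A`. -/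
noncomputable def numSubtreesOn {V : Type*} (G : SimpleGraph V) (A : Set V) : ℕ :=
  Set.ncard {S : Set V | A ⊆ S ∧ (G.induce S).Connected}

/-- Number of subtrees containing the vertex `v`. -/
noncomputable def numSubtrees {V : Type*} (G : SimpleGraph V) (v : V) : ℕ :=
  numSubtreesOn G {v}

/-- Subtree core: vertices maximizing the number of subtrees containing them. -/
noncomputable def subtreeCore {V : Type*} (G : SimpleGraph V) : Set V :=
  {v | ∀ u, numSubtrees G u ≤ numSubtrees G v}

/-- Distance between two sets of vertices: minimum pairwise distance. -/
noncomputable def setDist {V : Type*} (G : SimpleGraph V) (A B : Set V) : ℕ :=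
  sInf {d | ∃ a ∈ A, ∃ b ∈ B, G.dist a b = d}

/-- The path-star tree `P_{n-g,g}`: a path on vertices `0, …, n-g-1` (paper labels
`1, …, n-g`) with `g` pendant vertices `n-g, …, n-1` attached to vertex `n-g-1`. -/
def pathStar (n g : ℕ) : SimpleGraph (Fin n) :=
  SimpleGraph.fromRel fun i j =>
    (i.val + 1 = j.val ∧ j.val < n - g) ∨ (i.val = n - g - 1 ∧ n - g ≤ j.val)

/-- The tree obtained from `G` by detaching the pendant vertex `y` and attaching it
as a pendant vertex adjacent to `w`. -/
def reattach {V : Type*} (G : SimpleGraph V) (y w : V) : SimpleGraph V :=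
  SimpleGraph.fromRel fun a b => (G.Adj a b ∧ a ≠ y ∧ b ≠ y) ∨ (a = y ∧ b = w)

section Aux

variable {V : Type} [Fintype V] [DecidableEq V] {G : SimpleGraph V}

/-- inclusion hom from induced subgraph to the graph -/
def inclHom (G : SimpleGraph V) (S : Set V) : G.induce S →g G :=
  ⟨Subtype.val, fun h => h⟩

lemma conn_insert {S : Set V} {a b : V} (hconn : (G.induce S).Connected)
    (ha : a ∈ S) (hadj : G.Adj a b) : (G.induce (insert b S)).Connected := by
  have hne : Nonempty ↥(insert b S) := ⟨⟨a, Set.mem_insert_of_mem _ ha⟩⟩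
  refine ⟨?_⟩
  have key : ∀ z : ↥(insert b S), (G.induce (insert b S)).Reachable z
      ⟨a, Set.mem_insert_of_mem _ ha⟩ := by
    intro z
    rcases z with ⟨z, hz⟩
    rcases Set.mem_insert_iff.mp hz with hzb | hzS
    · subst hzb
      exact Adj.reachable (by exact hadj.symm)
    · have r := hconn.preconnected ⟨z, hzS⟩ ⟨a, ha⟩
      exact r.map (⟨fun x => ⟨x.1, Set.mem_insert_of_mem _ x.2⟩,
        fun h => h⟩ : G.induce S →g G.induce (insert b S))
  intro x y
  exact (key x).trans (key y).symm

lemma singleton_conn (b : V) : (G.induce ({b} : Set V)).Connected := by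
  have hne : Nonempty ↥({b} : Set V) := ⟨⟨b, rfl⟩⟩
  refine ⟨?_⟩
  intro x y
  have : x = y := by
    rcases x with ⟨x, hx⟩; rcases y with ⟨y, hy⟩
    simp only [Set.mem_singleton_iff] at hx hy
    subst hx; subst hy; rfl
  rw [this]

lemma not_mem_of_conn (hT : G.IsAcyclic) {a b c : V} (hab : G.Adj a b)
    (hbc : G.Adj b c) (hac : a ≠ c) {S : Set V} (hconn : (G.induce S).Connected)
    (ha : a ∈ S) (hb : b ∉ S) : c ∉ S := by
  intro hc
  obtain ⟨w⟩ := hconn.preconnected ⟨a, ha⟩ ⟨c, hc⟩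
  set W : G.Walk a c := w.map (inclHom G S) with hW
  have hbsup : b ∉ W.support := by
    show b ∉ (w.map (inclHom G S)).support
    rw [Walk.support_map]
    intro hmem
    obtain ⟨x, _, hx2⟩ := List.mem_map.mp hmem
    exact hb (hx2 ▸ x.2)
  set q : G.Walk a c := Walk.cons hab (Walk.cons hbc Walk.nil) with hq
  have hqp : q.IsPath := by
    rw [hq]
    simp [Walk.cons_isPath_iff, hab.ne, hac, hbc.ne]
  have := hT.path_unique W.toPath ⟨q, hqp⟩
  have hbq : b ∈ q.support := by simp [hq]
  have : b ∈ (W.toPath : G.Walk a c).support := by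
    rw [this]; exact hbq
  exact hbsup (W.support_toPath_subset this)

lemma inj_lemma (hT : G.IsAcyclic) {a b c : V} (hab : G.Adj a b)
    (hbc : G.Adj b c) (hac : a ≠ c) :
    {S : Set V | a ∈ S ∧ b ∉ S ∧ (G.induce S).Connected}.ncard <
    {S : Set V | b ∈ S ∧ c ∉ S ∧ (G.induce S).Connected}.ncard := by
  set D := {S : Set V | a ∈ S ∧ b ∉ S ∧ (G.induce S).Connected} with hD
  set C := {S : Set V | b ∈ S ∧ c ∉ S ∧ (G.induce S).Connected} with hC
  have himg : (insert b) '' D ⊂ C := by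
    constructor
    · rintro T ⟨S, ⟨haS, hbS, hcn⟩, rfl⟩
      refine ⟨Set.mem_insert _ _, ?_, conn_insert hcn haS hab⟩
      have hcS : c ∉ S := not_mem_of_conn hT hab hbc hac hcn haS hbS
      simp only [Set.mem_insert_iff]
      push_neg
      exact ⟨hbc.ne', hcS⟩
    · intro hsub
      have hbC : ({b} : Set V) ∈ C := ⟨rfl, by simp [hbc.ne'], singleton_conn b⟩
      -- show {b} not in image leads to contradiction? rather show C ⊄ image: find elt of C not in image
      have : ({b} : Set V) ∈ (insert b) '' D := hsub hbC
      obtain ⟨S, ⟨haS, hbS, _⟩, hins⟩ := this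
      have : a ∈ ({b} : Set V) := hins ▸ Set.mem_insert_of_mem _ haS
      exact hab.ne (Set.mem_singleton_iff.mp this)
  have hinj : Set.InjOn (insert b) D := by
    rintro S1 ⟨_, h1, _⟩ S2 ⟨_, h2, _⟩ heq
    have e1 : insert b S1 \ {b} = S1 := Set.insert_diff_self_of_notMem h1
    have e2 : insert b S2 \ {b} = S2 := Set.insert_diff_self_of_notMem h2
    rw [← e1, ← e2, heq]
  calc D.ncard = ((insert b) '' D).ncard := (Set.ncard_image_of_injOn hinj).symm
    _ < C.ncard := Set.ncard_lt_ncard himg (Set.toFinite _)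

lemma decomp (G : SimpleGraph V) (a b : V) (hne : a ≠ b) :
    numSubtrees G a =
      {S : Set V | a ∈ S ∧ b ∈ S ∧ (G.induce S).Connected}.ncard +
      {S : Set V | a ∈ S ∧ b ∉ S ∧ (G.induce S).Connected}.ncard := by
  have h0 : numSubtrees G a = {S : Set V | a ∈ S ∧ (G.induce S).Connected}.ncard := by
    unfold numSubtrees numSubtreesOn
    congr 1
    ext S
    simp [Set.singleton_subset_iff]
  rw [h0, ← Set.ncard_union_eq ?disj (Set.toFinite _) (Set.toFinite _)]
  · congr 1
    ext S
    by_cases hb : b ∈ S <;> simp [hb] <;> tauto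
  case disj =>
    rw [Set.disjoint_left]
    rintro S ⟨_, hbS, _⟩ ⟨_, hbS', _⟩
    exact hbS' hbS

lemma set_symm (G : SimpleGraph V) (a b : V) :
    {S : Set V | a ∈ S ∧ b ∈ S ∧ (G.induce S).Connected} =
    {S : Set V | b ∈ S ∧ a ∈ S ∧ (G.induce S).Connected} := by
  ext S; simp only [Set.mem_setOf_eq]; tauto

lemma concave (hT : G.IsAcyclic) {a b c : V} (hab : G.Adj a b)
    (hbc : G.Adj b c) (hac : a ≠ c) :
    numSubtrees G a + numSubtrees G c < 2 * numSubtrees G b := by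
  have d1 := decomp G a b hab.ne
  have d2 := decomp G c b hbc.ne'
  have d3 := decomp G b a hab.ne'
  have d4 := decomp G b c hbc.ne
  have i1 := inj_lemma hT hab hbc hac
  have i2 := inj_lemma hT hbc.symm hab.symm hac.symm
  have e1 := set_symm G a b
  have e2 := set_symm G c b
  rw [e1] at d1
  rw [e2] at d2
  omega

lemma descent (hT : G.IsAcyclic) {b v : V} (q : G.Walk b v) :
    ∀ {a : V} (h : G.Adj a b), (Walk.cons h q).IsPath → ∀ k : ℤ, 1 ≤ k →
    (numSubtrees G b : ℤ) ≤ (numSubtrees G a : ℤ) - k →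
    (numSubtrees G v : ℤ) ≤ (numSubtrees G a : ℤ) - k := by
  induction q with
  | nil => intro a h hp k hk hb; exact hb
  | @cons b c v h' q' ih =>
    intro a h hp k hk hb
    have hp' : (Walk.cons h' q').IsPath := hp.of_cons
    have hnm := ((Walk.cons_isPath_iff h _).mp hp).2
    have hac : a ≠ c := by
      intro he
      refine hnm ?_
      rw [he, Walk.support_cons]
      exact List.mem_cons_of_mem _ q'.start_mem_support
    have hcon := concave hT h h' hac
    have hcon' : (numSubtrees G a : ℤ) + numSubtrees G c < 2 * numSubtrees G b := by
      exact_mod_cast hcon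
    have hc : (numSubtrees G c : ℤ) ≤ (numSubtrees G b : ℤ) - (k + 1) := by linarith
    have hv := ih h' hp' (k + 1) (by linarith) hc
    linarith

end Aux

/-- The subtree core of a tree consists of either one vertex or two adjacent vertices. -/
theorem subtreeCore_one_or_two_adjacent {V : Type} [Fintype V] [DecidableEq V]
    (G : SimpleGraph V) (hT : G.IsTree) :
    (∃ v : V, subtreeCore G = {v}) ∨ ∃ u v : V, G.Adj u v ∧ subtreeCore G = {u, v} := by
  have hconn := hT.isConnected
  have hNe : Nonempty V := hconn.nonempty
  obtain ⟨v, hv⟩ := Finite.exists_max (numSubtrees G)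
  have hvcore : v ∈ subtreeCore G := hv
  have nogap : ∀ x y, x ∈ subtreeCore G → y ∈ subtreeCore G → x ≠ y → G.Adj x y := by
    intro x y hx hy hxy
    by_contra hadj
    obtain ⟨w0⟩ := hconn.preconnected x y
    obtain ⟨p, hp⟩ := w0.toPath
    cases p with
    | nil => exact hxy rfl
    | @cons _ b _ h q =>
      cases q with
      | nil => exact hadj h
      | @cons _ c _ h' q' =>
        have hb0 : numSubtrees G b ≤ numSubtrees G x := hx b
        have hxc : x ≠ c := by
          intro he
          refine ((Walk.cons_isPath_iff h _).mp hp).2 ?_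
          rw [he, Walk.support_cons]
          exact List.mem_cons_of_mem _ q'.start_mem_support
        have hcon := concave hT.IsAcyclic h h' hxc
        have hcon' : (numSubtrees G x : ℤ) + numSubtrees G c
            < 2 * numSubtrees G b := by exact_mod_cast hcon
        have hb0' : (numSubtrees G b : ℤ) ≤ numSubtrees G x := by exact_mod_cast hb0
        have hc : (numSubtrees G c : ℤ) ≤ (numSubtrees G b : ℤ) - 1 := by linarith
        have hy' := descent hT.IsAcyclic q' h' hp.of_cons 1 le_rfl hc
        have hxy' : (numSubtrees G x : ℤ) ≤ numSubtrees G y := by exact_mod_cast hy x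
        linarith
  have tri : ∀ x y z : V, G.Adj x y → G.Adj y z → G.Adj x z → False := by
    intro x y z hxy hyz hxz
    have heq := hT.IsAcyclic.path_unique
      (⟨Walk.cons hxz Walk.nil, by simp [hxz.ne]⟩ : G.Path x z)
      ⟨Walk.cons hxy (Walk.cons hyz Walk.nil),
        by simp [Walk.cons_isPath_iff, hxy.ne, hyz.ne]; exact hxz.ne⟩
    have := congrArg (fun p : G.Path x z => (p : G.Walk x z).length) heq
    simp at this
  by_cases hone : subtreeCore G = {v}
  · exact Or.inl ⟨v, hone⟩
  · right
    have hex : ∃ u ∈ subtreeCore G, u ≠ v := by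
      by_contra hno
      push_neg at hno
      exact hone (Set.eq_singleton_iff_unique_mem.mpr ⟨hvcore, hno⟩)
    obtain ⟨u, hu, huv⟩ := hex
    refine ⟨u, v, nogap u v hu hvcore huv, ?_⟩
    ext w
    simp only [Set.mem_insert_iff, Set.mem_singleton_iff]
    constructor
    · intro hw
      by_contra hw2
      push_neg at hw2
      exact tri w u v (nogap w u hw hu hw2.1) (nogap u v hu hvcore huv)
        (nogap w v hw hvcore hw2.2)
    · rintro (rfl | rfl)
      · exact hu
      · exact hvcore
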